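/- Let |GHZ⟩ = (|000⟩ + |111⟩)/√2 ∈ ℂ²⊗ℂ²⊗ℂ², and let the parties' observables be the 2×2 Hermitian matrices A₁ = B₁ = σ_z, A₂ = B₂ = σ_x, C₁ = (σ_z − σ_x)/√2, C₂ = (σ_z + σ_x)/√2. Define the quantum correlators ⟨A_xB_yC_z⟩ := ⟨GHZ| A_x ⊗ B_y ⊗ C_z |GHZ⟩, ⟨A_xB_y⟩ := ⟨GHZ| A_x ⊗ B_y ⊗ I |GHZ⟩, ⟨B_yC_z⟩ := ⟨GHZ| I ⊗ B_y ⊗ C_z |GHZ⟩, and ⟨A_xC_z⟩_y := ⟨GHZ| A_x ⊗ I ⊗ C_z |GHZ⟩ (independent of y). Then 2⟨A₁B₁⟩ + ⟨A₁C₁⟩_{y=1} + ⟨A₁C₁⟩_{y=2} + 2⟨B₁C₂⟩ − 2⟨A₂B₂C₁⟩ + 2⟨A₂B₂C₂⟩ = 2(1 + 2√2), which exceeds the RCBL bound 6. -/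

import Mathlib

open Matrix Kronecker

/-- Pauli `σ_z`. -/
noncomputable def sigmaZ : Matrix (Fin 2) (Fin 2) ℂ := !![1, 0; 0, -1]

/-- Pauli `σ_x`. -/
noncomputable def sigmaX : Matrix (Fin 2) (Fin 2) ℂ := !![0, 1; 1, 0]

/-- Charlie's observable `C₁ = (σ_z − σ_x)/√2`. -/
noncomputable def obsC1 : Matrix (Fin 2) (Fin 2) ℂ :=
  ((Real.sqrt 2 : ℂ))⁻¹ • (sigmaZ - sigmaX)

/-- Charlie's observable `C₂ = (σ_z + σ_x)/√2`. -/
noncomputable def obsC2 : Matrix (Fin 2) (Fin 2) ℂ :=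
  ((Real.sqrt 2 : ℂ))⁻¹ • (sigmaZ + sigmaX)

/-- The three-qubit GHZ state `(|000⟩ + |111⟩)/√2`. -/
noncomputable def ghz3 : (Fin 2 × Fin 2) × Fin 2 → ℂ :=
  fun p => if p = ((0, 0), 0) ∨ p = ((1, 1), 1) then ((Real.sqrt 2 : ℂ))⁻¹ else 0

/-- The expectation value `⟨GHZ| M |GHZ⟩`. -/
noncomputable def ghzExp
    (M : Matrix ((Fin 2 × Fin 2) × Fin 2) ((Fin 2 × Fin 2) × Fin 2) ℂ) : ℂ :=
  star ghz3 ⬝ᵥ (M *ᵥ ghz3)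

lemma ghzExp_eq (M : Matrix ((Fin 2 × Fin 2) × Fin 2) ((Fin 2 × Fin 2) × Fin 2) ℂ) :
    ghzExp M = (2:ℂ)⁻¹ * (M ((0,0),0) ((0,0),0) + M ((0,0),0) ((1,1),1)
      + M ((1,1),1) ((0,0),0) + M ((1,1),1) ((1,1),1)) := by
  simp only [ghzExp, ghz3, dotProduct, mulVec, Pi.star_apply, Fintype.sum_prod_type,
    Fin.sum_univ_two]
  norm_num [Complex.star_def, ← Complex.ofReal_inv, Prod.ext_iff]
  ring_nf
  have h3 : ((Real.sqrt 2)⁻¹ : ℝ)^2 = 1/2 := by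
    rw [inv_pow, Real.sq_sqrt] <;> norm_num
  rw [← Complex.ofReal_pow, h3]
  push_cast
  ring

/-- **Quantum violation of the RCBL inequality.** With observables
`A₁ = B₁ = σ_z`, `A₂ = B₂ = σ_x`, `C₁ = (σ_z − σ_x)/√2`, `C₂ = (σ_z + σ_x)/√2`
measured on the GHZ state, the expression `I_RCBL` equals `2(1 + 2√2)`,
which exceeds the RCBL bound `6`. -/
theorem ghz_violates_rcbl_inequality :
    2 * ghzExp ((sigmaZ ⊗ₖ sigmaZ) ⊗ₖ (1 : Matrix (Fin 2) (Fin 2) ℂ))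
      + ghzExp ((sigmaZ ⊗ₖ (1 : Matrix (Fin 2) (Fin 2) ℂ)) ⊗ₖ obsC1)
      + ghzExp ((sigmaZ ⊗ₖ (1 : Matrix (Fin 2) (Fin 2) ℂ)) ⊗ₖ obsC1)
      + 2 * ghzExp (((1 : Matrix (Fin 2) (Fin 2) ℂ) ⊗ₖ sigmaZ) ⊗ₖ obsC2)
      - 2 * ghzExp ((sigmaX ⊗ₖ sigmaX) ⊗ₖ obsC1)
      + 2 * ghzExp ((sigmaX ⊗ₖ sigmaX) ⊗ₖ obsC2)
      = ((2 * (1 + 2 * Real.sqrt 2) : ℝ) : ℂ) ∧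
    (6 : ℝ) < 2 * (1 + 2 * Real.sqrt 2) := by
  constructor
  · simp only [ghzExp_eq, kroneckerMap_apply, sigmaZ, sigmaX, obsC1, obsC2,
      Matrix.one_apply, Matrix.smul_apply, Matrix.sub_apply, Matrix.add_apply]
    norm_num
    have h0 : ((Real.sqrt 2 : ℝ) : ℂ) ≠ 0 := by
      simp [Real.sqrt_eq_zero']
    have hm : ((Real.sqrt 2 : ℝ) : ℂ) * ((Real.sqrt 2 : ℝ) : ℂ) = 2 := by
      rw [← Complex.ofReal_mul, Real.mul_self_sqrt] <;> norm_num
    field_simp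
    linear_combination (-8:ℂ) * hm
  · nlinarith [Real.sq_sqrt (by norm_num : (2:ℝ) ≥ 0), Real.sqrt_nonneg 2]
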